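/- Let θ₁ and θ₂ be real numbers with θ₁ ≠ θ₂, let γ > 0, and let θ̂₁, θ̂₂ be independent real-valued random variables with θ̂₁ ~ N(θ₁, γ²) and θ̂₂ ~ N(θ₂, γ²). Let w = (θ̂₁ + θ̂₂)/2 be the standard FL (FedAvg) model. Then the expected GM-Appeal of w satisfies E[(1/2)(𝟙{(w−θ₁)² < (θ̂₁−θ₁)²} + 𝟙{(w−θ₂)² < (θ̂₂−θ₂)²})] ≤ 2·exp(−γ_G²/(5γ²)), where γ_G² = ((θ₂−θ₁)/2)². -/

import Mathlib

open MeasureTheory ProbabilityTheory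

open scoped NNReal ENNReal

lemma exp_mul_gaussianPDFReal (c m : ℝ) {v : ℝ≥0} (hv : v ≠ 0) (x : ℝ) :
    Real.exp (c * x) * gaussianPDFReal m v x
      = Real.exp (c * m + c ^ 2 * v / 2) * gaussianPDFReal (m + c * v) v x := by
  have hv' : (v : ℝ) ≠ 0 := by exact_mod_cast hv
  simp only [gaussianPDFReal]
  rw [mul_left_comm, mul_left_comm (Real.exp _), ← Real.exp_add, ← Real.exp_add]
  congr 2
  field_simp
  ring

lemma integrable_exp_gaussianReal (c m : ℝ) {v : ℝ≥0} (hv : v ≠ 0) :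
    Integrable (fun x => Real.exp (c * x)) (gaussianReal m v) := by
  rw [gaussianReal_of_var_ne_zero _ hv]
  rw [integrable_withDensity_iff (measurable_gaussianPDF m v)
    (Filter.Eventually.of_forall fun x => ENNReal.ofReal_lt_top)]
  have : (fun x => Real.exp (c * x) * (gaussianPDF m v x).toReal)
      = fun x => Real.exp (c * m + c ^ 2 * v / 2) * gaussianPDFReal (m + c * v) v x := by
    funext x
    rw [gaussianPDF, ENNReal.toReal_ofReal (gaussianPDFReal_nonneg m v x),
      exp_mul_gaussianPDFReal c m hv x]
  rw [this]
  exact (integrable_gaussianPDFReal _ _).const_mul _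

lemma integral_exp_gaussianReal (c m : ℝ) {v : ℝ≥0} (hv : v ≠ 0) :
    ∫ x, Real.exp (c * x) ∂(gaussianReal m v) = Real.exp (c * m + c ^ 2 * v / 2) := by
  rw [gaussianReal_of_var_ne_zero _ hv]
  have hpdf : gaussianPDF m v = fun x => ((gaussianPDFReal m v x).toNNReal : ℝ≥0∞) := rfl
  rw [hpdf, integral_withDensity_eq_integral_smul
    ((measurable_gaussianPDFReal m v).real_toNNReal)]
  have : (fun x => (gaussianPDFReal m v x).toNNReal • Real.exp (c * x))
      = fun x => Real.exp (c * m + c ^ 2 * v / 2) * gaussianPDFReal (m + c * v) v x := by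
    funext x
    rw [NNReal.smul_def, smul_eq_mul, Real.coe_toNNReal _ (gaussianPDFReal_nonneg m v x),
      mul_comm, exp_mul_gaussianPDFReal c m hv x]
  rw [this, integral_const_mul, integral_gaussianPDFReal_eq_one _ hv, mul_one]

lemma exp_moment {Ω : Type*} [MeasurableSpace Ω] (μ : Measure Ω)
    (Z : Ω → ℝ) (hZm : Measurable Z) (m : ℝ) {v : ℝ≥0} (hv : v ≠ 0)
    (hZ : Measure.map Z μ = gaussianReal m v) (t : ℝ) :
    Integrable (fun ω => Real.exp (t * Z ω)) μ ∧
      ∫ ω, Real.exp (t * Z ω) ∂μ = Real.exp (t * m + t ^ 2 * v / 2) := by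
  have h1 := integrable_exp_gaussianReal t m hv
  rw [← hZ] at h1
  have h2 : Integrable ((fun x => Real.exp (t * x)) ∘ Z) μ :=
    (integrable_map_measure h1.aestronglyMeasurable hZm.aemeasurable).mp h1
  refine ⟨h2, ?_⟩
  rw [← integral_map hZm.aemeasurable h1.aestronglyMeasurable, hZ,
    integral_exp_gaussianReal t m hv]

lemma chern {Ω : Type*} [MeasurableSpace Ω] (μ : Measure Ω) [IsProbabilityMeasure μ]
    (θ₁ θ₂ γ : ℝ) (hγ : 0 < γ)
    (X Y : Ω → ℝ) (hXm : Measurable X) (hYm : Measurable Y)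
    (hX : Measure.map X μ = gaussianReal θ₁ ((γ ^ 2).toNNReal))
    (hY : Measure.map Y μ = gaussianReal θ₂ ((γ ^ 2).toNNReal))
    (hindep : IndepFun X Y μ) (a b c : ℝ) :
    (μ {ω | c ≤ a * X ω + b * Y ω}).toReal
      ≤ Real.exp (a * θ₁ + b * θ₂ + (a ^ 2 + b ^ 2) * γ ^ 2 / 2 - c) := by
  have hv : ((γ ^ 2).toNNReal : ℝ≥0) ≠ 0 := by
    simp [Real.toNNReal_eq_zero, not_le, pow_pos hγ, hγ.ne']
  have hvv : (((γ ^ 2).toNNReal : ℝ≥0) : ℝ) = γ ^ 2 := Real.coe_toNNReal _ (sq_nonneg γ)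
  obtain ⟨hiX, hEX⟩ := exp_moment μ X hXm θ₁ hv hX a
  obtain ⟨hiY, hEY⟩ := exp_moment μ Y hYm θ₂ hv hY b
  rw [hvv] at hEX hEY
  have hind2 : IndepFun (fun ω => Real.exp (a * X ω)) (fun ω => Real.exp (b * Y ω)) μ :=
    hindep.comp ((measurable_const_mul a).exp) ((measurable_const_mul b).exp)
  have hiP : Integrable (fun ω => Real.exp (a * X ω) * Real.exp (b * Y ω)) μ :=
    hind2.integrable_mul hiX hiY
  have hEP : ∫ ω, Real.exp (a * X ω) * Real.exp (b * Y ω) ∂μ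
      = (∫ ω, Real.exp (a * X ω) ∂μ) * ∫ ω, Real.exp (b * Y ω) ∂μ :=
    hind2.integral_fun_mul_eq_mul_integral hiX.aestronglyMeasurable hiY.aestronglyMeasurable
  have hmarkov := mul_meas_ge_le_integral_of_nonneg
    (ae_of_all μ fun ω => (mul_pos (Real.exp_pos _) (Real.exp_pos _)).le) hiP (Real.exp c)
  have hsub : {ω | c ≤ a * X ω + b * Y ω}
      ⊆ {ω | Real.exp c ≤ Real.exp (a * X ω) * Real.exp (b * Y ω)} := by
    intro ω hω
    rw [Set.mem_setOf_eq, ← Real.exp_add]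
    exact Real.exp_le_exp.2 hω
  have hmono : (μ {ω | c ≤ a * X ω + b * Y ω}).toReal
      ≤ (μ {ω | Real.exp c ≤ Real.exp (a * X ω) * Real.exp (b * Y ω)}).toReal :=
    ENNReal.toReal_mono (measure_ne_top μ _) (measure_mono hsub)
  have hpos := Real.exp_pos c
  calc (μ {ω | c ≤ a * X ω + b * Y ω}).toReal
      ≤ (μ {ω | Real.exp c ≤ Real.exp (a * X ω) * Real.exp (b * Y ω)}).toReal := hmono
    _ ≤ (∫ ω, Real.exp (a * X ω) * Real.exp (b * Y ω) ∂μ) / Real.exp c := by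
        rw [le_div_iff₀ hpos]
        calc _ = Real.exp c * (μ {ω | Real.exp c ≤ Real.exp (a * X ω) * Real.exp (b * Y ω)}).toReal := by ring
        _ ≤ _ := hmarkov
    _ = Real.exp (a * θ₁ + b * θ₂ + (a ^ 2 + b ^ 2) * γ ^ 2 / 2 - c) := by
        rw [hEP, hEX, hEY, ← Real.exp_add, ← Real.exp_sub]
        congr 1
        ring

set_option maxHeartbeats 1000000 in
lemma main_aux {Ω : Type*} [MeasurableSpace Ω] (μ : Measure Ω) [IsProbabilityMeasure μ]
    (θ₁ θ₂ γ : ℝ) (h12 : θ₁ < θ₂) (hγ : 0 < γ)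
    (X Y : Ω → ℝ) (hXm : Measurable X) (hYm : Measurable Y)
    (hX : Measure.map X μ = gaussianReal θ₁ ((γ ^ 2).toNNReal))
    (hY : Measure.map Y μ = gaussianReal θ₂ ((γ ^ 2).toNNReal))
    (hindep : IndepFun X Y μ) :
    ∫ ω, (1 / 2 : ℝ) *
        ((if ((X ω + Y ω) / 2 - θ₁) ^ 2 < (X ω - θ₁) ^ 2 then (1 : ℝ) else 0)
          + (if ((X ω + Y ω) / 2 - θ₂) ^ 2 < (Y ω - θ₂) ^ 2 then (1 : ℝ) else 0)) ∂μ
      ≤ 2 * Real.exp (-(((θ₂ - θ₁) / 2) ^ 2) / (5 * γ ^ 2)) := by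
  have hg2 : (0:ℝ) < γ ^ 2 := pow_pos hγ 2
  have hd : (0:ℝ) < θ₂ - θ₁ := sub_pos.2 h12
  set l1 : ℝ := (θ₂ - θ₁) / (2 * γ ^ 2) with hl1def
  set l2 : ℝ := (θ₂ - θ₁) / (10 * γ ^ 2) with hl2def
  have hl1 : 0 < l1 := div_pos hd (by positivity)
  have hl2 : 0 < l2 := div_pos hd (by positivity)
  set S₁ : Set Ω := {ω | ((X ω + Y ω) / 2 - θ₁) ^ 2 < (X ω - θ₁) ^ 2} with hS₁def
  set S₂ : Set Ω := {ω | ((X ω + Y ω) / 2 - θ₂) ^ 2 < (Y ω - θ₂) ^ 2} with hS₂def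
  have hw : Measurable fun ω => (X ω + Y ω) / 2 := (hXm.add hYm).div_const 2
  have hS₁m : MeasurableSet S₁ :=
    measurableSet_lt ((hw.sub_const θ₁).pow_const 2) ((hXm.sub_const θ₁).pow_const 2)
  have hS₂m : MeasurableSet S₂ :=
    measurableSet_lt ((hw.sub_const θ₂).pow_const 2) ((hYm.sub_const θ₂).pow_const 2)
  -- rewrite the integral as measures
  have hkey : ∫ ω, (1 / 2 : ℝ) *
        ((if ((X ω + Y ω) / 2 - θ₁) ^ 2 < (X ω - θ₁) ^ 2 then (1 : ℝ) else 0)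
          + (if ((X ω + Y ω) / 2 - θ₂) ^ 2 < (Y ω - θ₂) ^ 2 then (1 : ℝ) else 0)) ∂μ
      = 1 / 2 * ((μ S₁).toReal + (μ S₂).toReal) := by
    have hfun : (fun ω => (1 / 2 : ℝ) *
        ((if ((X ω + Y ω) / 2 - θ₁) ^ 2 < (X ω - θ₁) ^ 2 then (1 : ℝ) else 0)
          + (if ((X ω + Y ω) / 2 - θ₂) ^ 2 < (Y ω - θ₂) ^ 2 then (1 : ℝ) else 0)))
        = fun ω => (1 / 2 : ℝ) *
          (S₁.indicator (fun _ => (1:ℝ)) ω + S₂.indicator (fun _ => (1:ℝ)) ω) := by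
      funext ω
      simp [Set.indicator_apply, hS₁def, hS₂def, Set.mem_setOf_eq]
    rw [hfun, integral_const_mul,
      integral_add ((integrable_const (1:ℝ)).indicator hS₁m)
        ((integrable_const (1:ℝ)).indicator hS₂m),
      integral_indicator_const (1:ℝ) hS₁m, integral_indicator_const (1:ℝ) hS₂m]
    simp [Measure.real]
  rw [hkey]
  -- the three Chernoff events
  set Ea : Set Ω := {ω | (0:ℝ) ≤ l1 * X ω + -l1 * Y ω} with hEadef
  set Eb : Set Ω := {ω | -(4 * l2 * θ₁) ≤ -(3 * l2) * X ω + -l2 * Y ω} with hEbdef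
  set Ec : Set Ω := {ω | 4 * l2 * θ₂ ≤ l2 * X ω + 3 * l2 * Y ω} with hEcdef
  have hsub1 : S₁ ⊆ Ea ∪ Eb := by
    intro ω hω
    simp only [hS₁def, Set.mem_setOf_eq] at hω
    have h : 0 < (X ω - Y ω) * (3 * X ω + Y ω - 4 * θ₁) := by nlinarith [hω]
    rcases mul_pos_iff.mp h with ⟨h1, h2⟩ | ⟨h1, h2⟩
    · left
      simp only [hEadef, Set.mem_setOf_eq]
      nlinarith [mul_pos hl1 h1]
    · right
      simp only [hEbdef, Set.mem_setOf_eq]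
      nlinarith [mul_pos hl2 (neg_pos.2 h2)]
  have hsub2 : S₂ ⊆ Ec ∪ Ea := by
    intro ω hω
    simp only [hS₂def, Set.mem_setOf_eq] at hω
    have h : 0 < (Y ω - X ω) * (X ω + 3 * Y ω - 4 * θ₂) := by nlinarith [hω]
    rcases mul_pos_iff.mp h with ⟨h1, h2⟩ | ⟨h1, h2⟩
    · left
      simp only [hEcdef, Set.mem_setOf_eq]
      nlinarith [mul_pos hl2 h2]
    · right
      simp only [hEadef, Set.mem_setOf_eq]
      nlinarith [mul_pos hl1 (neg_pos.2 h1)]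
  have hb : ∀ s t u : Set Ω, s ⊆ t ∪ u → (μ s).toReal ≤ (μ t).toReal + (μ u).toReal := by
    intro s t u hsub
    have h1 : μ s ≤ μ t + μ u := (measure_mono hsub).trans (measure_union_le t u)
    have h2 := ENNReal.toReal_mono (by finiteness) h1
    rwa [ENNReal.toReal_add (measure_ne_top μ t) (measure_ne_top μ u)] at h2
  have hBa := chern μ θ₁ θ₂ γ hγ X Y hXm hYm hX hY hindep l1 (-l1) 0
  have hBb := chern μ θ₁ θ₂ γ hγ X Y hXm hYm hX hY hindep (-(3 * l2)) (-l2) (-(4 * l2 * θ₁))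
  have hBc := chern μ θ₁ θ₂ γ hγ X Y hXm hYm hX hY hindep l2 (3 * l2) (4 * l2 * θ₂)
  set T : ℝ := -(((θ₂ - θ₁) / 2) ^ 2) / (5 * γ ^ 2) with hTdef
  have hEaT : (μ Ea).toReal ≤ Real.exp T := by
    refine hBa.trans (Real.exp_le_exp.2 ?_)
    have heq : l1 * θ₁ + -l1 * θ₂ + (l1 ^ 2 + (-l1) ^ 2) * γ ^ 2 / 2 - 0
        = -((θ₂ - θ₁) ^ 2) / (4 * γ ^ 2) := by
      rw [hl1def]; field_simp [hg2.ne']; ring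
    rw [heq, hTdef, div_le_div_iff₀ (by positivity) (by positivity)]
    nlinarith [mul_nonneg (sq_nonneg (θ₂ - θ₁)) hg2.le]
  have hEbT : (μ Eb).toReal ≤ Real.exp T := by
    refine hBb.trans (le_of_eq (congrArg Real.exp ?_))
    rw [hl2def, hTdef]; field_simp [hg2.ne']; ring
  have hEcT : (μ Ec).toReal ≤ Real.exp T := by
    refine hBc.trans (le_of_eq (congrArg Real.exp ?_))
    rw [hl2def, hTdef]; field_simp [hg2.ne']; ring
  have h1 := (hb S₁ Ea Eb hsub1)
  have h2 := (hb S₂ Ec Ea hsub2)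
  linarith


theorem fedavg_gm_appeal_upper_bound
    {Ω : Type*} [MeasurableSpace Ω] (μ : Measure Ω) [IsProbabilityMeasure μ]
    (θ₁ θ₂ γ : ℝ) (hne : θ₁ ≠ θ₂) (hγ : 0 < γ)
    (X Y : Ω → ℝ) (hXm : Measurable X) (hYm : Measurable Y)
    (hX : Measure.map X μ = gaussianReal θ₁ ((γ ^ 2).toNNReal))
    (hY : Measure.map Y μ = gaussianReal θ₂ ((γ ^ 2).toNNReal))
    (hindep : IndepFun X Y μ) :
    ∫ ω, (1 / 2 : ℝ) *
        ((if ((X ω + Y ω) / 2 - θ₁) ^ 2 < (X ω - θ₁) ^ 2 then (1 : ℝ) else 0)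
          + (if ((X ω + Y ω) / 2 - θ₂) ^ 2 < (Y ω - θ₂) ^ 2 then (1 : ℝ) else 0)) ∂μ
      ≤ 2 * Real.exp (-(((θ₂ - θ₁) / 2) ^ 2) / (5 * γ ^ 2)) := by
  rcases hne.lt_or_gt with h12 | h21
  · exact main_aux μ θ₁ θ₂ γ h12 hγ X Y hXm hYm hX hY hindep
  · have h := main_aux μ θ₂ θ₁ γ h21 hγ Y X hYm hXm hY hX hindep.symm
    calc ∫ ω, (1 / 2 : ℝ) *
        ((if ((X ω + Y ω) / 2 - θ₁) ^ 2 < (X ω - θ₁) ^ 2 then (1 : ℝ) else 0)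
          + (if ((X ω + Y ω) / 2 - θ₂) ^ 2 < (Y ω - θ₂) ^ 2 then (1 : ℝ) else 0)) ∂μ
        = ∫ ω, (1 / 2 : ℝ) *
        ((if ((Y ω + X ω) / 2 - θ₂) ^ 2 < (Y ω - θ₂) ^ 2 then (1 : ℝ) else 0)
          + (if ((Y ω + X ω) / 2 - θ₁) ^ 2 < (X ω - θ₁) ^ 2 then (1 : ℝ) else 0)) ∂μ := by
          congr 1
          funext ω
          rw [add_comm (Y ω) (X ω)]
          ring
      _ ≤ 2 * Real.exp (-(((θ₁ - θ₂) / 2) ^ 2) / (5 * γ ^ 2)) := h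
      _ = 2 * Real.exp (-(((θ₂ - θ₁) / 2) ^ 2) / (5 * γ ^ 2)) := by
          rw [show ((θ₁ - θ₂) / 2) ^ 2 = ((θ₂ - θ₁) / 2) ^ 2 by ring]
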